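/- arXiv:1707.01947 — 3 statements merged into one kernel-verified Lean document; each statement's English description precedes it below -/
import Mathlib

section
/- Define recursively for D = 1/2: p₀(τ) = 1, p₁ as the piecewise linear function √3(4τ−1) on [0,1/2) and √3(−4τ+3) on [1/2,1], and for i ≥ 2, pᵢ(τ) = ∫_{1/2}^{τ} p_{i−1}(η) dη − ∫₀¹ ∫_{1/2}^{τ'} p_{i−1}(η) dη dτ'. Then for every even i ≥ 2, pᵢ satisfies pᵢ(τ) = pᵢ(1/2 − τ) for all τ ∈ (0, 1/2), and for every odd i ≥ 3, pᵢ satisfies −pᵢ(τ) = pᵢ(1/2 − τ) for all τ ∈ (0, 1/2). -/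
noncomputable def pwm : ℕ → ℝ → ℝ
  | 0 => fun _ => 1
  | 1 => fun τ => if τ < 1/2 then Real.sqrt 3 * (4 * τ - 1) else Real.sqrt 3 * (-4 * τ + 3)
  | (i + 2) => fun τ =>
      (∫ η in (1/2:ℝ)..τ, pwm (i + 1) η)
        - ∫ τ' in (0:ℝ)..1, (∫ η in (1/2:ℝ)..τ', pwm (i + 1) η)

lemma pwm_one_eq : pwm 1 = fun τ : ℝ => Real.sqrt 3 * (1 - |4 * τ - 2|) := by
  funext τ
  show (if τ < 1/2 then Real.sqrt 3 * (4 * τ - 1) else Real.sqrt 3 * (-4 * τ + 3)) = _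
  split_ifs with h
  · rw [abs_of_nonpos (by linarith)]; ring
  · rw [abs_of_nonneg (by linarith)]; ring

lemma pwm_two_eq (i : ℕ) : pwm (i + 2) = fun τ =>
    (∫ η in (1/2:ℝ)..τ, pwm (i + 1) η)
      - ∫ τ' in (0:ℝ)..1, (∫ η in (1/2:ℝ)..τ', pwm (i + 1) η) := rfl

lemma pwm_cont : ∀ i, Continuous (pwm i)
  | 0 => continuous_const
  | 1 => by rw [pwm_one_eq]; fun_prop
  | (i + 2) => by
    have h := pwm_cont (i + 1)
    rw [pwm_two_eq]
    exact (intervalIntegral.continuous_primitive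
      (fun a b => h.intervalIntegrable a b) _).sub continuous_const

lemma key : ∀ i : ℕ,
    (∀ τ : ℝ, pwm (i+1) (1 - τ) = (-1 : ℝ)^i * pwm (i+1) τ) ∧
    (∀ τ ∈ Set.Icc (0:ℝ) (1/2), pwm (i+1) (1/2 - τ) = (-1 : ℝ)^(i+1) * pwm (i+1) τ) := by
  intro i
  induction i with
  | zero =>
    constructor
    · intro τ
      rw [pwm_one_eq]
      simp only [pow_zero, one_mul]
      have : |4 * (1 - τ) - 2| = |4 * τ - 2| := by
        rw [abs_sub_comm (4*τ) 2]; ring_nf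
      rw [this]
    · rintro τ ⟨h0, h1⟩
      rw [pwm_one_eq]
      simp only [pow_one, neg_one_mul]
      have e1 : |4 * (1/2 - τ) - 2| = 4 * τ := by
        rw [show (4 * (1/2 - τ) - 2 : ℝ) = -(4*τ) by ring, abs_neg,
          abs_of_nonneg (by linarith)]
      have e2 : |4 * τ - 2| = 2 - 4 * τ := by
        rw [abs_of_nonpos (by linarith)]; ring
      rw [e1, e2]; ring
  | succ i ih =>
    obtain ⟨hC, hB⟩ := ih
    set p : ℝ → ℝ := pwm (i + 1) with hp
    set ε : ℝ := (-1 : ℝ)^(i+1) with hε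
    have hεsq : ε * ε = 1 := by
      rw [hε, ← pow_add]
      exact Even.neg_one_pow ⟨i+1, rfl⟩
    have hC' : ∀ τ, p (1 - τ) = -ε * p τ := by
      intro τ
      rw [hC τ, hε, pow_succ]
      ring
    have hpc : Continuous p := pwm_cont (i+1)
    have hint : ∀ a b : ℝ, IntervalIntegrable p MeasureTheory.volume a b :=
      fun a b => hpc.intervalIntegrable a b
    set F : ℝ → ℝ := fun τ => ∫ η in (1/2:ℝ)..τ, p η with hF
    have hFapp : ∀ τ, F τ = ∫ η in (1/2:ℝ)..τ, p η := fun _ => rfl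
    have hFc : Continuous F := intervalIntegral.continuous_primitive hint _
    set c : ℝ := ∫ τ' in (0:ℝ)..1, F τ' with hc
    have hval : ∀ τ, pwm (i + 2) τ = F τ - c := fun τ => rfl
    clear_value c F ε
    clear hF hp
    -- fact_b : F reflection about 1/4
    have fact_b : ∀ τ ∈ Set.Icc (0:ℝ) (1/2), F (1/2 - τ) = F 0 - ε * F τ := by
      rintro τ ⟨h0, h1⟩
      have sub : (∫ x in τ..(1/2:ℝ), p (1/2 - x)) = ∫ x in (0:ℝ)..(1/2 - τ), p x := by
        rw [intervalIntegral.integral_comp_sub_left p (1/2)]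
        norm_num
      have congr1 : (∫ x in τ..(1/2:ℝ), p (1/2 - x)) = ∫ x in τ..(1/2:ℝ), ε * p x := by
        apply intervalIntegral.integral_congr
        intro x hx
        have hx' : x ∈ Set.Icc (0:ℝ) (1/2) := by
          rcases Set.mem_uIcc.1 hx with ⟨ha, hb⟩ | ⟨ha, hb⟩ <;>
            exact ⟨by linarith, by linarith⟩
        exact hB x hx'
      have key2 : (∫ x in (0:ℝ)..(1/2 - τ), p x) = -ε * F τ := by
        rw [← sub, congr1, intervalIntegral.integral_const_mul,
          intervalIntegral.integral_symm, ← hFapp τ]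
        ring
      have split : F (1/2 - τ) = F 0 + ∫ x in (0:ℝ)..(1/2 - τ), p x := by
        rw [hFapp, hFapp]
        exact (intervalIntegral.integral_add_adjacent_intervals (hint _ _) (hint _ _)).symm
      rw [split, key2]; ring
    -- fact_c : F reflection about 1/2
    have fact_c : ∀ τ : ℝ, F (1 - τ) = ε * F τ := by
      intro τ
      have sub : (∫ x in τ..(1/2:ℝ), p (1 - x)) = ∫ x in (1/2:ℝ)..(1 - τ), p x := by
        rw [intervalIntegral.integral_comp_sub_left p 1]
        norm_num
      have congr1 : (∫ x in τ..(1/2:ℝ), p (1 - x)) = ∫ x in τ..(1/2:ℝ), -ε * p x :=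
        intervalIntegral.integral_congr fun x _ => hC' x
      rw [hFapp, hFapp, ← sub, congr1, intervalIntegral.integral_const_mul,
        intervalIntegral.integral_symm]
      ring
    -- fact_d : F 0 = ε * F 0
    have fact_d : F 0 = ε * F 0 := by
      have sub : (∫ x in (0:ℝ)..(1/2:ℝ), p (1/2 - x)) = ∫ x in (0:ℝ)..(1/2:ℝ), p x := by
        rw [intervalIntegral.integral_comp_sub_left p (1/2)]
        norm_num
      have congr1 : (∫ x in (0:ℝ)..(1/2:ℝ), p (1/2 - x))
          = ∫ x in (0:ℝ)..(1/2:ℝ), ε * p x := by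
        apply intervalIntegral.integral_congr
        intro x hx
        have hx' : x ∈ Set.Icc (0:ℝ) (1/2) := by
          rcases Set.mem_uIcc.1 hx with ⟨ha, hb⟩ | ⟨ha, hb⟩ <;>
            exact ⟨by linarith, by linarith⟩
        exact hB x hx'
      have h1 : (∫ x in (0:ℝ)..(1/2:ℝ), p x) = ε * ∫ x in (0:ℝ)..(1/2:ℝ), p x := by
        conv_lhs => rw [← sub, congr1]
        rw [intervalIntegral.integral_const_mul]
      have hF0 : F 0 = -∫ x in (0:ℝ)..(1/2:ℝ), p x := by
        rw [hFapp]; exact intervalIntegral.integral_symm _ _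
      rw [hF0]
      conv_lhs => rw [h1]
      ring
    have hFint : ∀ a b : ℝ, IntervalIntegrable F MeasureTheory.volume a b :=
      fun a b => hFc.intervalIntegrable a b
    -- c = F 0 / 2
    have fact_cval : c = F 0 / 2 := by
      have hsplit : c = (∫ x in (0:ℝ)..(1/2:ℝ), F x) + ∫ x in (1/2:ℝ)..(1:ℝ), F x := by
        rw [hc]
        exact (intervalIntegral.integral_add_adjacent_intervals (hFint _ _) (hFint _ _)).symm
      have h1 : (∫ x in (1/2:ℝ)..(1:ℝ), F x) = ε * ∫ x in (0:ℝ)..(1/2:ℝ), F x := by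
        have sub : (∫ x in (0:ℝ)..(1/2:ℝ), F (1 - x)) = ∫ x in (1/2:ℝ)..(1:ℝ), F x := by
          rw [intervalIntegral.integral_comp_sub_left F 1]
          norm_num
        rw [← sub]
        rw [show (fun x => F (1 - x)) = fun x => ε * F x from funext fact_c]
        exact intervalIntegral.integral_const_mul _ _
      have h2 : (∫ x in (0:ℝ)..(1/2:ℝ), F x)
          = F 0 / 2 - ε * ∫ x in (0:ℝ)..(1/2:ℝ), F x := by
        have sub : (∫ x in (0:ℝ)..(1/2:ℝ), F (1/2 - x)) = ∫ x in (0:ℝ)..(1/2:ℝ), F x := by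
          rw [intervalIntegral.integral_comp_sub_left F (1/2)]
          norm_num
        have congr1 : (∫ x in (0:ℝ)..(1/2:ℝ), F (1/2 - x))
            = ∫ x in (0:ℝ)..(1/2:ℝ), (F 0 - ε * F x) := by
          apply intervalIntegral.integral_congr
          intro x hx
          have hx' : x ∈ Set.Icc (0:ℝ) (1/2) := by
            rcases Set.mem_uIcc.1 hx with ⟨ha, hb⟩ | ⟨ha, hb⟩ <;>
              exact ⟨by linarith, by linarith⟩
          exact fact_b x hx'
        have expand : (∫ x in (0:ℝ)..(1/2:ℝ), (F 0 - ε * F x))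
            = F 0 / 2 - ε * ∫ x in (0:ℝ)..(1/2:ℝ), F x := by
          rw [intervalIntegral.integral_sub (intervalIntegrable_const)
            ((hFint _ _).const_mul ε), intervalIntegral.integral_const_mul,
            intervalIntegral.integral_const]
          norm_num
          ring
        conv_lhs => rw [← sub, congr1]
        exact expand
      rw [hsplit, h1]
      linarith [h2]
    have fact_cε : ε * c = c := by
      rw [fact_cval, show ε * (F 0 / 2) = (ε * F 0) / 2 by ring, ← fact_d]
    constructor
    · intro τ
      rw [hval, hval, fact_c]
      calc ε * F τ - c = ε * F τ - ε * c := by rw [fact_cε]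
        _ = ε * (F τ - c) := by ring
    · intro τ hτ
      rw [hval, hval, fact_b τ hτ]
      have hsgn : ((-1:ℝ))^(i+1+1) = -ε := by rw [pow_succ, ← hε]; ring
      rw [hsgn]
      have hF0 : F 0 = 2 * c := by rw [fact_cval]; ring
      calc F 0 - ε * F τ - c = 2 * c - ε * F τ - c := by rw [hF0]
        _ = ε * c - ε * F τ := by rw [fact_cε]; ring
        _ = -ε * (F τ - c) := by ring

theorem stmt3 :
    ∀ i : ℕ,
      (2 ≤ i → Even i → ∀ τ ∈ Set.Ioo (0:ℝ) (1/2), pwm i τ = pwm i (1/2 - τ)) ∧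
      (3 ≤ i → Odd i → ∀ τ ∈ Set.Ioo (0:ℝ) (1/2), -pwm i τ = pwm i (1/2 - τ)) := by
  intro i
  constructor
  · intro h2 hev τ hτ
    obtain ⟨j, rfl⟩ : ∃ j, i = j + 1 := ⟨i - 1, by omega⟩
    have := (key j).2 τ ⟨hτ.1.le, hτ.2.le⟩
    rw [this, hev.neg_one_pow, one_mul]
  · intro h3 hodd τ hτ
    obtain ⟨j, rfl⟩ : ∃ j, i = j + 1 := ⟨i - 1, by omega⟩
    have := (key j).2 τ ⟨hτ.1.le, hτ.2.le⟩
    rw [this, hodd.neg_one_pow, neg_one_mul]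
end

section
/- Let f : [0,1] → ℝ be continuous with −f(τ) = f(1/2 − τ) for τ ∈ (0,1/2) and −f(τ) = f(τ + 1/2) for τ ∈ (0,1/2). Then F(τ) = ∫_{1/2}^{τ} f(η) dη satisfies F(τ) = F(1/2 − τ) for all τ ∈ (0, 1/2) and −F(τ) = F(τ + 1/2) for all τ ∈ (0, 1/2), and ∫₀¹ F(τ) dτ = 0. -/
open intervalIntegral MeasureTheory

theorem stmt13 (f : ℝ → ℝ) (hc : ContinuousOn f (Set.Icc (0:ℝ) 1))
    (hodd : ∀ τ ∈ Set.Ioo (0:ℝ) (1/2), -f τ = f (1/2 - τ))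
    (hanti : ∀ τ ∈ Set.Ioo (0:ℝ) (1/2), -f τ = f (τ + 1/2)) :
    (∀ τ ∈ Set.Ioo (0:ℝ) (1/2),
        (∫ η in (1/2:ℝ)..τ, f η) = ∫ η in (1/2:ℝ)..(1/2 - τ), f η) ∧
      (∀ τ ∈ Set.Ioo (0:ℝ) (1/2),
        -(∫ η in (1/2:ℝ)..τ, f η) = ∫ η in (1/2:ℝ)..(τ + 1/2), f η) ∧
      (∫ τ in (0:ℝ)..1, ∫ η in (1/2:ℝ)..τ, f η) = 0 := by
  have hInt : ∀ a b : ℝ, a ∈ Set.Icc (0:ℝ) 1 → b ∈ Set.Icc (0:ℝ) 1 →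
      IntervalIntegrable f MeasureTheory.volume a b := by
    intro a b ha hb
    exact (hc.mono (Set.uIcc_subset_Icc ha hb)).intervalIntegrable
  -- Part 1
  have h1 : ∀ τ ∈ Set.Ioo (0:ℝ) (1/2),
      (∫ η in (1/2:ℝ)..τ, f η) = ∫ η in (1/2:ℝ)..(1/2 - τ), f η := by
    intro τ hτ
    obtain ⟨hτ0, hτ2⟩ := hτ
    have hτm : τ ∈ Set.Icc (0:ℝ) 1 := ⟨le_of_lt hτ0, by linarith⟩
    have hτm' : (1/2 - τ) ∈ Set.Icc (0:ℝ) 1 := ⟨by linarith, by linarith⟩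
    have hhalf : (1/2:ℝ) ∈ Set.Icc (0:ℝ) 1 := by norm_num
    have hsub : (∫ η in (1/2:ℝ)..τ, f η) - (∫ η in (1/2:ℝ)..(1/2 - τ), f η)
        = ∫ η in (1/2 - τ)..τ, f η :=
      integral_interval_sub_left (hInt _ _ hhalf hτm) (hInt _ _ hhalf hτm')
    have hzero : (∫ η in (1/2 - τ)..τ, f η) = 0 := by
      have hsubset : Set.uIcc (1/2 - τ) τ ⊆ Set.Ioo (0:ℝ) (1/2) := by
        exact Set.ordConnected_Ioo.uIcc_subset ⟨by linarith, by linarith⟩ ⟨by linarith, by linarith⟩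
      have hcomp : (∫ η in (1/2 - τ)..τ, f (1/2 - η)) = ∫ η in (1/2 - τ)..τ, f η := by
        have := integral_comp_sub_left (a := 1/2 - τ) (b := τ) f (1/2)
        simpa using this
      have hcongr2 : (∫ η in (1/2 - τ)..τ, f (1/2 - η))
          = -∫ η in (1/2 - τ)..τ, f η := by
        rw [← intervalIntegral.integral_neg]
        refine integral_congr ?_
        intro x hx
        show f (1/2 - x) = -f x
        linarith [hodd x (hsubset hx)]
      linarith [hcomp, hcongr2]
    linarith [hsub, hzero]
  -- mean of f on [0,1/2] is zero
  have hmean : (∫ η in (0:ℝ)..(1/2:ℝ), f η) = 0 := by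
    have hae : ∀ᵐ x ∂(MeasureTheory.volume : Measure ℝ),
        x ∈ Set.uIoc (0:ℝ) (1/2) → f x = -f (1/2 - x) := by
      have h2 : ∀ᵐ x ∂(MeasureTheory.volume : Measure ℝ), x ≠ (1/2:ℝ) := by
        rw [MeasureTheory.ae_iff]
        simpa using MeasureTheory.measure_singleton (1/2 : ℝ)
      filter_upwards [h2] with x hx hxmem
      rw [Set.uIoc_of_le (by norm_num)] at hxmem
      have hx' : x ∈ Set.Ioo (0:ℝ) (1/2) := ⟨hxmem.1, lt_of_le_of_ne hxmem.2 hx⟩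
      have := hodd x hx'
      linarith
    have hcongr : (∫ η in (0:ℝ)..(1/2:ℝ), f η)
        = ∫ η in (0:ℝ)..(1/2:ℝ), -f (1/2 - η) := integral_congr_ae hae
    have hcomp : (∫ η in (0:ℝ)..(1/2:ℝ), f (1/2 - η)) = ∫ η in (0:ℝ)..(1/2:ℝ), f η := by
      have := integral_comp_sub_left (a := (0:ℝ)) (b := (1/2:ℝ)) f (1/2)
      simpa using this
    rw [intervalIntegral.integral_neg, hcomp] at hcongr
    linarith
  -- Part 2
  have h2 : ∀ τ ∈ Set.Ioo (0:ℝ) (1/2),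
      -(∫ η in (1/2:ℝ)..τ, f η) = ∫ η in (1/2:ℝ)..(τ + 1/2), f η := by
    intro τ hτ
    obtain ⟨hτ0, hτ2⟩ := hτ
    have hhalf : (1/2:ℝ) ∈ Set.Icc (0:ℝ) 1 := by norm_num
    have hzero : (0:ℝ) ∈ Set.Icc (0:ℝ) 1 := by norm_num
    have hτm : τ ∈ Set.Icc (0:ℝ) 1 := ⟨le_of_lt hτ0, by linarith⟩
    have hτp : (τ + 1/2) ∈ Set.Icc (0:ℝ) 1 := ⟨by linarith, by linarith⟩
    -- ∫_{1/2}^{τ+1/2} f = ∫_0^τ f(x+1/2)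
    have hcomp : (∫ x in (0:ℝ)..τ, f (x + 1/2)) = ∫ η in (1/2:ℝ)..(τ + 1/2), f η := by
      have := integral_comp_add_right (a := (0:ℝ)) (b := τ) f (1/2)
      simpa using this
    have hcongr : (∫ x in (0:ℝ)..τ, f (x + 1/2)) = ∫ x in (0:ℝ)..τ, -f x := by
      refine integral_congr_ae ?_
      filter_upwards with x hxmem
      rw [Set.uIoc_of_le (le_of_lt hτ0)] at hxmem
      have hx' : x ∈ Set.Ioo (0:ℝ) (1/2) := ⟨hxmem.1, lt_of_le_of_lt hxmem.2 hτ2⟩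
      exact (hanti x hx').symm
    rw [intervalIntegral.integral_neg] at hcongr
    -- ∫_{1/2}^τ f = ∫_{1/2}^0 f + ∫_0^τ f
    have hsplit : (∫ η in (1/2:ℝ)..(0:ℝ), f η) + (∫ η in (0:ℝ)..τ, f η)
        = ∫ η in (1/2:ℝ)..τ, f η :=
      integral_add_adjacent_intervals (hInt _ _ hhalf hzero) (hInt _ _ hzero hτm)
    have hrev : (∫ η in (1/2:ℝ)..(0:ℝ), f η) = -(∫ η in (0:ℝ)..(1/2:ℝ), f η) :=
      intervalIntegral.integral_symm 0 (1/2)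
    rw [hrev, hmean] at hsplit
    rw [← hcomp, hcongr]
    linarith
  refine ⟨h1, h2, ?_⟩
  -- Part 3
  set F : ℝ → ℝ := fun τ => ∫ η in (1/2:ℝ)..τ, f η with hF
  have hFcont : ContinuousOn F (Set.Icc (0:ℝ) 1) := by
    have : Set.uIcc (0:ℝ) 1 = Set.Icc (0:ℝ) 1 := Set.uIcc_of_le (by norm_num)
    have hmem : (1/2:ℝ) ∈ Set.uIcc (0:ℝ) 1 := by rw [this]; norm_num
    have := continuousOn_primitive_interval' (hInt 0 1 (by norm_num) (by norm_num)) hmem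
    rwa [Set.uIcc_of_le (by norm_num : (0:ℝ) ≤ 1)] at this
  have hFint : ∀ a b : ℝ, a ∈ Set.Icc (0:ℝ) 1 → b ∈ Set.Icc (0:ℝ) 1 →
      IntervalIntegrable F MeasureTheory.volume a b := by
    intro a b ha hb
    exact (hFcont.mono (Set.uIcc_subset_Icc ha hb)).intervalIntegrable
  have hsplit : (∫ τ in (0:ℝ)..(1/2:ℝ), F τ) + (∫ τ in (1/2:ℝ)..(1:ℝ), F τ)
      = ∫ τ in (0:ℝ)..(1:ℝ), F τ :=
    integral_add_adjacent_intervals (hFint _ _ (by norm_num) (by norm_num))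
      (hFint _ _ (by norm_num) (by norm_num))
  have hcomp : (∫ τ in (0:ℝ)..(1/2:ℝ), F (τ + 1/2)) = ∫ τ in (1/2:ℝ)..(1:ℝ), F τ := by
    have := integral_comp_add_right (a := (0:ℝ)) (b := (1/2:ℝ)) F (1/2)
    norm_num at this
    convert this using 2 <;> norm_num
  have hcongr : (∫ τ in (0:ℝ)..(1/2:ℝ), F (τ + 1/2)) = ∫ τ in (0:ℝ)..(1/2:ℝ), -F τ := by
    refine integral_congr_ae ?_
    have h2' : ∀ᵐ x ∂(MeasureTheory.volume : Measure ℝ), x ≠ (1/2:ℝ) := by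
      rw [MeasureTheory.ae_iff]
      simpa using MeasureTheory.measure_singleton (1/2 : ℝ)
    filter_upwards [h2'] with x hx hxmem
    rw [Set.uIoc_of_le (by norm_num)] at hxmem
    have hx' : x ∈ Set.Ioo (0:ℝ) (1/2) := ⟨hxmem.1, lt_of_le_of_ne hxmem.2 hx⟩
    exact (h2 x hx').symm
  rw [intervalIntegral.integral_neg] at hcongr
  have : (∫ τ in (0:ℝ)..(1:ℝ), F τ) = 0 := by
    rw [← hsplit, ← hcomp, hcongr]
    ring
  simpa [hF] using this
end

section
/- Let A, B ∈ ℝ^{n×n}, and let {p_k}_{k=0}^{N} be L²([0,1]) functions with Gram matrix I = T_s·∫₀¹ P(τ)P(τ)ᵀ dτ and stiffness matrix Q = −∫₀¹ P'(τ)P(τ)ᵀ dτ, where P(τ) = (p₀(τ),…,p_N(τ))ᵀ and f_s = 1/T_s. If x̂ʰ_j(t₁,t₂) = Σ_k p_k(τ(t₂)) w_{j,k}(t₁) with τ(t₂) = t₂/T_s mod 1, then the Galerkin conditions ∫₀^{T_s} [A(∂x̂ʰ/∂t₁ + ∂x̂ʰ/∂t₂) + B x̂ʰ − ĉ]·p_l(τ(t₂))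 dt₂ = 0 for all l are equivalent to the ODE system (A ⊗ I)·dW/dt₁ + (B ⊗ I + A ⊗ Q)·W(t₁) = C(t₁), where ⊗ denotes the Kronecker product and W stacks the coefficient vectors. -/
open Matrix MeasureTheory

private lemma stmt14_shuffle {n m : ℕ} (a b : Fin n → ℝ) (u v : Fin n → Fin m → ℝ)
    (P Pd : Fin m → ℝ) (pl fs : ℝ) :
    (∑ j, a j * ∑ k, (P k * u j k + fs * Pd k * v j k) + ∑ j, b j * ∑ k, P k * v j k) * pl
      = ∑ j, ∑ k, (a j * u j k * (P k * pl)
          + (a j * (fs * v j k) * (Pd k * pl) + b j * v j k * (P k * pl))) := by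
  rw [add_mul, Finset.sum_mul, Finset.sum_mul, ← Finset.sum_add_distrib]
  refine Finset.sum_congr rfl fun j _ => ?_
  rw [Finset.mul_sum, Finset.sum_mul, Finset.mul_sum, Finset.sum_mul, ← Finset.sum_add_distrib]
  exact Finset.sum_congr rfl fun k _ => by ring

theorem stmt14 (n N : ℕ) (A B : Matrix (Fin n) (Fin n) ℝ)
    (Ts : ℝ) (hTs : 0 < Ts)
    (p p' : Fin (N + 1) → ℝ → ℝ)
    (hp : ∀ k τ, HasDerivAt (p k) (p' k τ) τ)
    (hp'c : ∀ k, Continuous (p' k))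
    (hper : ∀ k, p k 0 = p k 1)
    (cc : ℝ × ℝ → Fin n → ℝ)
    (hcc : ∀ t₁ i, IntervalIntegrable (fun t₂ => cc (t₁, t₂) i) volume 0 Ts)
    (W W' : ℝ → Fin n → Fin (N + 1) → ℝ) :
    -- fast relative time
    let τ : ℝ → ℝ := fun t₂ => Int.fract (t₂ / Ts)
    let fs : ℝ := 1 / Ts
    -- Gram and "stiffness" matrices
    let Imat : Matrix (Fin (N + 1)) (Fin (N + 1)) ℝ :=
      fun k l => Ts * ∫ s in (0:ℝ)..1, p k s * p l s
    let Q : Matrix (Fin (N + 1)) (Fin (N + 1)) ℝ :=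
      fun k l => -∫ s in (0:ℝ)..1, p' k s * p l s
    -- Galerkin expansion and its multirate derivative
    let xh : ℝ → ℝ → Fin n → ℝ :=
      fun t₁ t₂ j => ∑ k, p k (τ t₂) * W t₁ j k
    let dxh : ℝ → ℝ → Fin n → ℝ :=
      fun t₁ t₂ j => ∑ k, (p k (τ t₂) * W' t₁ j k + fs * p' k (τ t₂) * W t₁ j k)
    -- right-hand side
    let C : ℝ → Fin n × Fin (N + 1) → ℝ :=
      fun t₁ il => ∫ t₂ in (0:ℝ)..Ts, cc (t₁, t₂) il.1 * p il.2 (τ t₂)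
    ((∀ (t₁ : ℝ) (i : Fin n) (l : Fin (N + 1)),
        (∫ t₂ in (0:ℝ)..Ts,
          (A.mulVec (dxh t₁ t₂) i + B.mulVec (xh t₁ t₂) i - cc (t₁, t₂) i)
            * p l (τ t₂)) = 0)
      ↔ (∀ t₁ : ℝ,
          (Matrix.kroneckerMap (· * ·) A Imat).mulVec (fun jk => W' t₁ jk.1 jk.2)
            + (Matrix.kroneckerMap (· * ·) B Imat
                + Matrix.kroneckerMap (· * ·) A Q).mulVec (fun jk => W t₁ jk.1 jk.2)
          = C t₁)) := by
  intro τ fs Imat Q xh dxh C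
  have hτ : ∀ t, τ t = Int.fract (t / Ts) := fun _ => rfl
  have hfs : fs = 1 / Ts := rfl
  have hI : ∀ k l, Imat k l = Ts * ∫ s in (0:ℝ)..1, p k s * p l s := fun _ _ => rfl
  have hQ : ∀ k l, Q k l = -∫ s in (0:ℝ)..1, p' k s * p l s := fun _ _ => rfl
  have hxh : ∀ t₁ t₂ j, xh t₁ t₂ j = ∑ k, p k (τ t₂) * W t₁ j k := fun _ _ _ => rfl
  have hdxh : ∀ t₁ t₂ j, dxh t₁ t₂ j
      = ∑ k, (p k (τ t₂) * W' t₁ j k + fs * p' k (τ t₂) * W t₁ j k) := fun _ _ _ => rfl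
  have hC : ∀ t₁ i l, C t₁ (i, l) = ∫ t₂ in (0:ℝ)..Ts, cc (t₁, t₂) i * p l (τ t₂) :=
    fun _ _ _ => rfl
  have hpc : ∀ k, Continuous (p k) :=
    fun k => continuous_iff_continuousAt.mpr fun x => (hp k x).continuousAt
  have hTs0 : Ts ≠ 0 := hTs.ne'
  have hdivc : Continuous fun t₂ : ℝ => t₂ / Ts := continuous_id.div_const Ts
  have hae : ∀ᵐ t₂ : ℝ ∂volume, t₂ ∈ Set.uIoc (0:ℝ) Ts → Int.fract (t₂ / Ts) = t₂ / Ts := by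
    have hne : ∀ᵐ t₂ : ℝ ∂volume, t₂ ≠ Ts := by
      rw [MeasureTheory.ae_iff]
      simp only [ne_eq, not_not, Set.setOf_eq_eq_singleton]
      exact measure_singleton Ts
    filter_upwards [hne] with t₂ hne2 hmem
    rw [Set.uIoc_of_le hTs.le] at hmem
    exact Int.fract_eq_self.mpr ⟨div_nonneg hmem.1.le hTs.le,
      (div_lt_one hTs).mpr (lt_of_le_of_ne hmem.2 hne2)⟩
  have hparts : ∀ k l : Fin (N + 1), (∫ s in (0:ℝ)..1, p' k s * p l s) = Q l k := by
    intro k l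
    have h := intervalIntegral.integral_deriv_mul_eq_sub (u := p k) (v := p l)
      (fun x _ => hp k x) (fun x _ => hp l x)
      ((hp'c k).intervalIntegrable 0 1) ((hp'c l).intervalIntegrable 0 1)
    rw [← hper k, ← hper l, sub_self] at h
    have hsplit : (∫ s in (0:ℝ)..1, (p' k s * p l s + p k s * p' l s))
        = (∫ s in (0:ℝ)..1, p' k s * p l s) + ∫ s in (0:ℝ)..1, p k s * p' l s :=
      intervalIntegral.integral_add (((hp'c k).mul (hpc l)).intervalIntegrable 0 1)
        (((hpc k).mul (hp'c l)).intervalIntegrable 0 1)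
    rw [hsplit] at h
    have hcomm : (∫ s in (0:ℝ)..1, p k s * p' l s) = ∫ s in (0:ℝ)..1, p' l s * p k s :=
      intervalIntegral.integral_congr fun s _ => mul_comm _ _
    rw [hcomm] at h
    rw [hQ]
    linarith
  have key : ∀ (t₁ : ℝ) (i : Fin n) (l : Fin (N + 1)),
      (∫ t₂ in (0:ℝ)..Ts,
          (A.mulVec (dxh t₁ t₂) i + B.mulVec (xh t₁ t₂) i - cc (t₁, t₂) i) * p l (τ t₂))
        = (∑ j, ∑ k, (A i j * Imat k l * W' t₁ j k
            + (B i j * Imat k l + A i j * Q l k) * W t₁ j k)) - C t₁ (i, l) := by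
    intro t₁ i l
    set T : Fin n → Fin (N + 1) → ℝ → ℝ := fun j k s =>
      A i j * W' t₁ j k * (p k s * p l s)
        + (A i j * (fs * W t₁ j k) * (p' k s * p l s)
          + B i j * W t₁ j k * (p k s * p l s)) with hT
    have hTc : ∀ j k, Continuous (T j k) := by
      intro j k
      simp only [hT]
      exact (continuous_const.mul ((hpc k).mul (hpc l))).add
        ((continuous_const.mul ((hp'c k).mul (hpc l))).add
          (continuous_const.mul ((hpc k).mul (hpc l))))
    have hsum_c : Continuous fun t₂ : ℝ => ∑ j, ∑ k, T j k (t₂ / Ts) :=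
      continuous_finset_sum _ fun j _ =>
        continuous_finset_sum _ fun k _ => (hTc j k).comp hdivc
    have hcc_int : IntervalIntegrable (fun t₂ => cc (t₁, t₂) i * p l (t₂ / Ts)) volume 0 Ts :=
      (hcc t₁ i).mul_continuousOn ((hpc l).comp hdivc).continuousOn
    have step1 : (∫ t₂ in (0:ℝ)..Ts,
          (A.mulVec (dxh t₁ t₂) i + B.mulVec (xh t₁ t₂) i - cc (t₁, t₂) i) * p l (τ t₂))
        = ∫ t₂ in (0:ℝ)..Ts,
            ((∑ j, ∑ k, T j k (t₂ / Ts)) - cc (t₁, t₂) i * p l (t₂ / Ts)) := by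
      apply intervalIntegral.integral_congr_ae
      filter_upwards [hae] with t₂ hfr hmem
      simp only [Matrix.mulVec, dotProduct, hdxh, hxh, hτ, hfr hmem, hT]
      rw [sub_mul]
      congr 1
      exact stmt14_shuffle (fun j => A i j) (fun j => B i j) (fun j k => W' t₁ j k)
        (fun j k => W t₁ j k) (fun k => p k (t₂ / Ts)) (fun k => p' k (t₂ / Ts))
        (p l (t₂ / Ts)) fs
    rw [step1, intervalIntegral.integral_sub (hsum_c.intervalIntegrable 0 Ts) hcc_int]
    have step3 : (∫ t₂ in (0:ℝ)..Ts, ∑ j, ∑ k, T j k (t₂ / Ts))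
        = Ts * ∑ j, ∑ k, ∫ s in (0:ℝ)..1, T j k s := by
      have h2 : (∫ t₂ in (0:ℝ)..Ts, ∑ j, ∑ k, T j k (t₂ / Ts))
          = Ts • ∫ s in (0:ℝ) / Ts..Ts / Ts, ∑ j, ∑ k, T j k s :=
        intervalIntegral.integral_comp_div (fun s => ∑ j, ∑ k, T j k s) hTs0
      rw [h2, zero_div, div_self hTs0, smul_eq_mul]
      congr 1
      rw [intervalIntegral.integral_finset_sum
        (fun j _ => (continuous_finset_sum _ fun k _ => hTc j k).intervalIntegrable 0 1)]
      exact Finset.sum_congr rfl fun j _ =>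
        intervalIntegral.integral_finset_sum fun k _ => (hTc j k).intervalIntegrable 0 1
    have hTint : ∀ j k, (∫ s in (0:ℝ)..1, T j k s)
        = A i j * W' t₁ j k * (∫ s in (0:ℝ)..1, p k s * p l s)
          + (A i j * (fs * W t₁ j k) * (∫ s in (0:ℝ)..1, p' k s * p l s)
            + B i j * W t₁ j k * (∫ s in (0:ℝ)..1, p k s * p l s)) := by
      intro j k
      have i1 : IntervalIntegrable (fun s => A i j * W' t₁ j k * (p k s * p l s)) volume 0 1 :=
        (continuous_const.mul ((hpc k).mul (hpc l))).intervalIntegrable 0 1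
      have i2 : IntervalIntegrable
          (fun s => A i j * (fs * W t₁ j k) * (p' k s * p l s)) volume 0 1 :=
        (continuous_const.mul ((hp'c k).mul (hpc l))).intervalIntegrable 0 1
      have i3 : IntervalIntegrable (fun s => B i j * W t₁ j k * (p k s * p l s)) volume 0 1 :=
        (continuous_const.mul ((hpc k).mul (hpc l))).intervalIntegrable 0 1
      simp only [hT]
      rw [intervalIntegral.integral_add i1 (i2.add i3), intervalIntegral.integral_add i2 i3,
        intervalIntegral.integral_const_mul, intervalIntegral.integral_const_mul,
        intervalIntegral.integral_const_mul]
    have hCrw : (∫ t₂ in (0:ℝ)..Ts, cc (t₁, t₂) i * p l (t₂ / Ts)) = C t₁ (i, l) := by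
      rw [hC]
      symm
      apply intervalIntegral.integral_congr_ae
      filter_upwards [hae] with t₂ hfr hmem
      rw [hτ, hfr hmem]
    rw [step3, hCrw]
    congr 1
    rw [Finset.mul_sum]
    refine Finset.sum_congr rfl fun j _ => ?_
    rw [Finset.mul_sum]
    refine Finset.sum_congr rfl fun k _ => ?_
    rw [hTint j k, hI, ← hparts k l, hfs]
    field_simp
    ring
  have hIsym : ∀ k l, Imat k l = Imat l k := by
    intro k l
    rw [hI, hI]
    congr 1
    exact intervalIntegral.integral_congr fun s _ => mul_comm _ _
  have hRHS : ∀ (t₁ : ℝ) (i : Fin n) (l : Fin (N + 1)),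
      ((Matrix.kroneckerMap (· * ·) A Imat).mulVec (fun jk => W' t₁ jk.1 jk.2)
        + (Matrix.kroneckerMap (· * ·) B Imat
            + Matrix.kroneckerMap (· * ·) A Q).mulVec (fun jk => W t₁ jk.1 jk.2)) (i, l)
        = ∑ j, ∑ k, (A i j * Imat k l * W' t₁ j k
            + (B i j * Imat k l + A i j * Q l k) * W t₁ j k) := by
    intro t₁ i l
    simp only [Pi.add_apply, Matrix.mulVec, dotProduct, Matrix.kroneckerMap_apply,
      Matrix.add_apply, Fintype.sum_prod_type]
    rw [← Finset.sum_add_distrib]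
    refine Finset.sum_congr rfl fun j _ => ?_
    rw [← Finset.sum_add_distrib]
    refine Finset.sum_congr rfl fun k _ => ?_
    rw [hIsym l k]
  constructor
  · intro h t₁
    funext il
    obtain ⟨i, l⟩ := il
    have hk := key t₁ i l
    rw [h t₁ i l] at hk
    rw [hRHS t₁ i l]
    linarith [hk]
  · intro h t₁ i l
    have hv := congrFun (h t₁) (i, l)
    rw [hRHS t₁ i l] at hv
    rw [key t₁ i l, hv, sub_self]
end
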